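/- Let $R$ be a Noetherian commutative ring, $\mathfrak{m} \subseteq R$ an ideal, and $x \in \mathfrak{m}$. Then $\sqrt{(x)} = \sqrt{(x :_R \mathfrak{m}^\infty) \cap \mathfrak{m}}$. -/

import Mathlib

/-- Let `R` be a Noetherian commutative ring, `m ⊆ R` an ideal, and `x ∈ m`.
Then `√(x) = √((x :_R m^∞) ⊓ m)`, where `(x :_R m^∞) = ⋃ k, (x :_R m^k)`. -/
theorem radical_span_eq_radical_saturation_inf {R : Type*} [CommRing R] [IsNoetherianRing R]
    (m : Ideal R) (x : R) (hx : x ∈ m) :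
    (Ideal.span {x}).radical =
      ((⨆ k : ℕ, (Ideal.span {x}).colon ((m ^ k : Ideal R) : Set R)) ⊓ m).radical := by
  apply le_antisymm
  · apply Ideal.radical_mono
    refine le_inf ?_ (Ideal.span_le.mpr (Set.singleton_subset_iff.mpr hx))
    refine le_trans ?_ (le_iSup _ 0)
    intro r hr
    rw [Submodule.mem_colon]
    intro p _
    simpa [smul_eq_mul, mul_comm] using Ideal.mul_mem_left _ p hr
  · conv_rhs => rw [← Ideal.radical_idem (Ideal.span {x})]
    apply Ideal.radical_mono
    rintro r ⟨h1, h2⟩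
    have hdir : Directed (· ≤ ·) fun k : ℕ => (Ideal.span {x}).colon ((m ^ k : Ideal R) : Set R) := by
      intro i j
      exact ⟨max i j, Submodule.colon_mono le_rfl (Ideal.pow_le_pow_right (le_max_left i j)),
        Submodule.colon_mono le_rfl (Ideal.pow_le_pow_right (le_max_right i j))⟩
    obtain ⟨k, hk⟩ := (Submodule.mem_iSup_of_directed _ hdir).mp h1
    refine ⟨k + 1, ?_⟩
    have := (Submodule.mem_colon.mp hk) (r ^ k) (Ideal.pow_mem_pow h2 k)
    simpa [pow_succ, mul_comm, smul_eq_mul] using this
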